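/- For every profile π on the n-cube Q_n, Med(π) ⊆ f(π) for every consensus function f satisfying the Translation property (T) and the Majority property (Maj). -/
import Mathlib


/-- A vertex of the n-cube `Q_n`: an element of `{0,1}^n`. -/
abbrev Vertex (n : ℕ) := Fin n → Bool

/-- Coordinatewise addition modulo 2 (`u ⊕ v`). -/
def vxor {n : ℕ} (u v : Vertex n) : Vertex n := fun i => xor (u i) (v i)

/-- A profile: a nonempty finite sequence of vertices of `Q_n`. -/
def Profile (n : ℕ) := { l : List (Vertex n) // l ≠ [] }

/-- Translation of a profile: `π ⊕ v = (x₁ ⊕ v, …, x_k ⊕ v)`. -/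
def pxor {n : ℕ} (π : Profile n) (v : Vertex n) : Profile n :=
  ⟨π.1.map (fun x => vxor x v), by simpa using π.2⟩

/-- The Translation property (T) for a consensus function. -/
def Translation {n : ℕ} (f : Profile n → Set (Vertex n)) : Prop :=
  ∀ (π : Profile n) (u v : Vertex n), u ∈ f π → vxor u v ∈ f (pxor π v)

/-- Hamming distance on the n-cube. -/
def cubeDist {n : ℕ} (u v : Vertex n) : ℕ := hammingDist u v

/-- The all-zeros vertex `𝟎`. -/
def zeroV (n : ℕ) : Vertex n := fun _ => false

/-- `‖u‖ = d(𝟎,u)`, the number of ones in `u`. -/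
def vnorm {n : ℕ} (u : Vertex n) : ℕ := cubeDist (zeroV n) u

/-- `‖π‖ = max{‖x₁‖,…,‖x_k‖}`. -/
def pnorm {n : ℕ} (π : Profile n) : ℕ := (π.1.map vnorm).foldr max 0

/-- Eccentricity `e(x, π) = max_j d(x, x_j)`. -/
def ecc {n : ℕ} (π : Profile n) (x : Vertex n) : ℕ :=
  (π.1.map (fun y => cubeDist x y)).foldr max 0

/-- The center function. -/
def Cen {n : ℕ} (π : Profile n) : Set (Vertex n) :=
  {x | ∀ y : Vertex n, ecc π x ≤ ecc π y}

/-- Status `S_π(x) = Σ_j d(x, x_j)`. -/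
def status {n : ℕ} (π : Profile n) (x : Vertex n) : ℕ :=
  (π.1.map (fun y => cubeDist x y)).sum

/-- The median function. -/
def Med {n : ℕ} (π : Profile n) : Set (Vertex n) :=
  {x | ∀ y : Vertex n, status π x ≤ status π y}

/-- The anti-median function. -/
def AM {n : ℕ} (π : Profile n) : Set (Vertex n) :=
  {x | ∀ y : Vertex n, status π y ≤ status π x}

/-- `Σ_{j=1}^k xᵢ^j`: the number of profile entries with a 1 in coordinate `i`. -/
def cnt {n : ℕ} (π : Profile n) (i : Fin n) : ℕ :=
  (π.1.map (fun x => if x i then 1 else 0)).sum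

/-- The majority vertex `Maj(π)`: `wᵢ = 1` iff `Σ_j xᵢ^j > k/2`. -/
def Maj {n : ℕ} (π : Profile n) : Vertex n :=
  fun i => decide (π.1.length < 2 * cnt π i)

/-- The minority vertex `Min(π)`: `mᵢ = 1` iff `Σ_j xᵢ^j < k/2`. -/
def MinV {n : ℕ} (π : Profile n) : Vertex n :=
  fun i => decide (2 * cnt π i < π.1.length)

/-- The Condorcet score `Cs(π)`. -/
def Cs {n : ℕ} (π : Profile n) : ℕ :=
  (Finset.univ.filter (fun i : Fin n => 2 * cnt π i = π.1.length)).card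

/-- The Majority property (Maj). -/
def MajProp {n : ℕ} (f : Profile n → Set (Vertex n)) : Prop :=
  ∀ π : Profile n, Maj π ∈ f π

/-- The Minority property (Min). -/
def MinProp {n : ℕ} (f : Profile n → Set (Vertex n)) : Prop :=
  ∀ π : Profile n, MinV π ∈ f π

/-- The Restricted Range property (RR): `|f(π)| ≤ 2^{Cs(π)}`. -/
def RestrictedRange {n : ℕ} (f : Profile n → Set (Vertex n)) : Prop :=
  ∀ π : Profile n, (f π).ncard ≤ 2 ^ Cs π

/-- The `ℓ_p` status `ℓ_pS_π(x) = Σ_j d(x,x_j)^p`. -/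
noncomputable def lpStatus {n : ℕ} (p : ℝ) (π : Profile n) (x : Vertex n) : ℝ :=
  (π.1.map (fun y => (cubeDist x y : ℝ) ^ p)).sum

/-- The `ℓ_p`-function. -/
noncomputable def lpFun {n : ℕ} (p : ℝ) (π : Profile n) : Set (Vertex n) :=
  {x | ∀ y : Vertex n, lpStatus p π x ≤ lpStatus p π y}

/-- The `p`-Characteristic `Char_p(π) = Σ_j ‖x_j‖^p`. -/
noncomputable def Charp {n : ℕ} (p : ℝ) (π : Profile n) : ℝ :=
  (π.1.map (fun x => (vnorm x : ℝ) ^ p)).sum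

/-- Concatenation of profiles `π₁π₂`. -/
def pconcat {n : ℕ} (π₁ π₂ : Profile n) : Profile n :=
  ⟨π₁.1 ++ π₂.1, by simp [π₁.2]⟩

/-- The profile of length one consisting of the single vertex `x`. -/
def singleP {n : ℕ} (x : Vertex n) : Profile n := ⟨[x], by simp⟩

/-- The Consistency property (C). -/
def Consistency {n : ℕ} (f : Profile n → Set (Vertex n)) : Prop :=
  ∀ π₁ π₂ : Profile n, (f π₁ ∩ f π₂).Nonempty → f (pconcat π₁ π₂) = f π₁ ∩ f π₂

section Aux
variable {n : ℕ}

lemma vxor_vxor (x v : Vertex n) : vxor (vxor x v) v = x := by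
  funext i; simp [vxor, Bool.xor_assoc]

lemma pxor_pxor (π : Profile n) (v : Vertex n) : pxor (pxor π v) v = π := by
  apply Subtype.ext
  simp [pxor, List.map_map, Function.comp_def, vxor_vxor]

lemma cubeDist_vxor (a b v : Vertex n) :
    cubeDist (vxor a v) (vxor b v) = cubeDist a b := by
  unfold cubeDist hammingDist
  congr 1
  apply Finset.filter_congr
  intro i _
  cases ha : a i <;> cases hb : b i <;> cases hv : v i <;> simp [vxor, ha, hb, hv]

lemma status_pxor (π : Profile n) (x v : Vertex n) :
    status (pxor π v) (vxor x v) = status π x := by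
  unfold status
  simp [pxor, List.map_map, Function.comp_def, cubeDist_vxor]

lemma zero_mem_med (π : Profile n) (u : Vertex n) (hu : u ∈ Med π) :
    zeroV n ∈ Med (pxor π u) := by
  intro y
  have h0 : zeroV n = vxor u u := by funext i; simp [vxor, zeroV]
  have h1 : y = vxor (vxor y u) u := (vxor_vxor y u).symm
  rw [h0, h1, status_pxor, status_pxor]
  exact hu _

lemma hammingDist_eq_sum (x y : Vertex n) :
    cubeDist x y = ∑ i : Fin n, (if x i ≠ y i then 1 else 0) := by
  unfold cubeDist hammingDist
  rw [Finset.card_filter]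

lemma list_sum_comm (l : List (Vertex n)) (g : Fin n → Vertex n → ℕ) :
    (l.map (fun y => ∑ i : Fin n, g i y)).sum = ∑ i : Fin n, (l.map (g i)).sum := by
  induction l with
  | nil => simp
  | cons a t ih => simp [ih, Finset.sum_add_distrib]

lemma status_eq_sum (π : Profile n) (x : Vertex n) :
    status π x = ∑ i : Fin n, (π.1.map (fun y => if x i ≠ y i then (1:ℕ) else 0)).sum := by
  unfold status
  rw [show (fun y => cubeDist x y)
      = (fun y => ∑ i : Fin n, if x i ≠ y i then (1:ℕ) else 0) from
    funext (fun y => hammingDist_eq_sum x y)]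
  exact list_sum_comm π.1 _

lemma col_false (l : List (Vertex n)) (i : Fin n) :
    (l.map (fun y => if (false : Bool) ≠ y i then (1:ℕ) else 0)).sum
      = (l.map (fun x => if x i then 1 else 0)).sum := by
  induction l with
  | nil => simp
  | cons a t ih =>
      simp only [List.map_cons, List.sum_cons, ih]
      rcases Bool.dichotomy (a i) with h | h <;> rw [h]
      · rw [if_neg (by simp), if_neg (by simp)]
      · rw [if_pos (by simp), if_pos (by simp)]

lemma col_true (l : List (Vertex n)) (i : Fin n) :
    (l.map (fun y => if (true : Bool) ≠ y i then (1:ℕ) else 0)).sum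
      + (l.map (fun x => if x i then 1 else 0)).sum = l.length := by
  induction l with
  | nil => simp
  | cons a t ih =>
      simp only [List.map_cons, List.sum_cons, List.length_cons]
      generalize (t.map (fun y => if (true : Bool) ≠ y i then (1:ℕ) else 0)).sum = A at ih ⊢
      generalize (t.map (fun x => if x i then (1:ℕ) else 0)).sum = B at ih ⊢
      rcases Bool.dichotomy (a i) with h | h <;> rw [h]
      · rw [if_pos (by simp), if_neg (by simp)]
        omega
      · rw [if_neg (by simp), if_pos (by simp)]
        omega

lemma maj_of_zero_med (π : Profile n) (h : zeroV n ∈ Med π) :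
    Maj π = zeroV n := by
  funext i
  simp only [Maj, zeroV, decide_eq_false_iff_not, not_lt]
  set e : Vertex n := fun j => decide (j = i) with he
  have hle := h e
  rw [status_eq_sum, status_eq_sum] at hle
  set c0 : Fin n → ℕ := fun j =>
    (π.1.map (fun y => if zeroV n j ≠ y j then (1:ℕ) else 0)).sum with hc0
  set c1 : Fin n → ℕ := fun j =>
    (π.1.map (fun y => if e j ≠ y j then (1:ℕ) else 0)).sum with hc1
  have hsplit0 : ∑ j, c0 j = c0 i + ∑ j ∈ Finset.univ.erase i, c0 j :=
    (Finset.add_sum_erase _ c0 (Finset.mem_univ i)).symm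
  have hsplit1 : ∑ j, c1 j = c1 i + ∑ j ∈ Finset.univ.erase i, c1 j :=
    (Finset.add_sum_erase _ c1 (Finset.mem_univ i)).symm
  have heq : ∑ j ∈ Finset.univ.erase i, c0 j = ∑ j ∈ Finset.univ.erase i, c1 j := by
    apply Finset.sum_congr rfl
    intro j hj
    have hji : j ≠ i := (Finset.mem_erase.mp hj).1
    simp only [hc0, hc1]
    congr 1
    apply List.map_congr_left
    intro y _
    have hej : e j = zeroV n j := by simp [he, zeroV, hji]
    rw [hej]
  have hle' : c0 i ≤ c1 i := by
    rw [hsplit0, hsplit1, heq] at hle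
    exact Nat.le_of_add_le_add_right hle
  have h0 : c0 i = cnt π i := by
    simp only [hc0, zeroV]
    exact col_false π.1 i
  have hei : e i = true := by simp [he]
  have h1 : c1 i + cnt π i = π.1.length := by
    simp only [hc1, hei]
    simpa [cnt] using col_true π.1 i
  have hcc : cnt π i ≤ c1 i := h0 ▸ hle'
  calc 2 * cnt π i = cnt π i + cnt π i := by ring
    _ ≤ c1 i + cnt π i := Nat.add_le_add_right hcc _
    _ = π.1.length := h1

end Aux

/-- For every profile `π`, `Med(π) ⊆ f(π)` for every consensus function `f`
satisfying (T) and (Maj). -/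
theorem stmt18 {n : ℕ} (π : Profile n) (f : Profile n → Set (Vertex n))
    (hf : ∀ π : Profile n, (f π).Nonempty)
    (hT : Translation f) (hMaj : MajProp f) :
    Med π ⊆ f π := by
  intro u hu
  have h0 : zeroV n ∈ Med (pxor π u) := zero_mem_med π u hu
  have hm : Maj (pxor π u) = zeroV n := maj_of_zero_med _ h0
  have hz : zeroV n ∈ f (pxor π u) := hm ▸ hMaj (pxor π u)
  have ht := hT (pxor π u) (zeroV n) u hz
  have hvx : vxor (zeroV n) u = u := by funext i; simp [vxor, zeroV]
  rwa [hvx, pxor_pxor] at ht
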